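/- Let A ∈ ℝ^{n×n}, let U ⊆ ℝ^n be a nonempty bounded set, and let T₁, T₂ ≥ 0. For T ≥ 0 define the input reachable set R_p(T) = { ∫_0^T exp(A(T − t)) u(t) dt : u : [0, T] → ℝ^n measurable with u(t) ∈ U for all t }. Then R_p(T₁ + T₂) = { exp(A T₂) x + y : x ∈ R_p(T₁), y ∈ R_p(T₂) }, i.e., R_p(T₁ + T₂) equals the Minkowski sum of exp(A T₂) · R_p(T₁) and R_p(T₂). -/

import Mathlib

open Matrix Set

/-- Matrix exponential of a real square matrix. -/
noncomputable def mexp {m : ℕ} (A : Matrix (Fin m) (Fin m) ℝ) : Matrix (Fin m) (Fin m) ℝ :=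
  NormedSpace.exp A

/-- The input reachable set
`R_p(T) = { ∫_0^T exp(A(T−t)) u(t) dt : u measurable, u(t) ∈ U on [0, T] }`. -/
noncomputable def Rp {n : ℕ} (A : Matrix (Fin n) (Fin n) ℝ) (U : Set (Fin n → ℝ))
    (T : ℝ) : Set (Fin n → ℝ) :=
  {x | ∃ u : ℝ → Fin n → ℝ, Measurable u ∧ (∀ t ∈ Set.Icc 0 T, u t ∈ U) ∧
      x = ∫ t in (0 : ℝ)..T, mexp ((T - t) • A) *ᵥ u t}

open MeasureTheory intervalIntegral

lemma cont_mexp {n : ℕ} (A : Matrix (Fin n) (Fin n) ℝ) (c : ℝ) :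
    Continuous fun t : ℝ => mexp ((c - t) • A) := by
  letI : SeminormedRing (Matrix (Fin n) (Fin n) ℝ) := Matrix.linftyOpSemiNormedRing
  letI : NormedRing (Matrix (Fin n) (Fin n) ℝ) := Matrix.linftyOpNormedRing
  letI : NormedAlgebra ℝ (Matrix (Fin n) (Fin n) ℝ) := Matrix.linftyOpNormedAlgebra
  letI : NormedAlgebra ℚ (Matrix (Fin n) (Fin n) ℝ) := NormedAlgebra.restrictScalars ℚ ℝ _
  exact NormedSpace.exp_continuous.comp
    (((continuous_const).sub continuous_id).smul (continuous_const (y := A)))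

lemma mexp_split {n : ℕ} (A : Matrix (Fin n) (Fin n) ℝ) (s t : ℝ) :
    mexp ((s + t) • A) = mexp (s • A) * mexp (t • A) := by
  rw [mexp, mexp, mexp, add_smul]
  exact Matrix.exp_add_of_commute _ _ (((Commute.refl A).smul_left s).smul_right t)

/-- `mulVec` packaged as a linear map into continuous linear maps. -/
noncomputable def matCLMₗ (n : ℕ) :
    Matrix (Fin n) (Fin n) ℝ →ₗ[ℝ] ((Fin n → ℝ) →L[ℝ] (Fin n → ℝ)) :=
  (LinearMap.toContinuousLinearMap (𝕜 := ℝ)).toLinearMap.comp Matrix.toLin'.toLinearMap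

noncomputable def matCLM {n : ℕ} (M : Matrix (Fin n) (Fin n) ℝ) :
    (Fin n → ℝ) →L[ℝ] (Fin n → ℝ) := matCLMₗ n M

lemma matCLM_apply {n : ℕ} (M : Matrix (Fin n) (Fin n) ℝ) (v : Fin n → ℝ) :
    matCLM M v = M *ᵥ v := by
  simp [matCLM, matCLMₗ, Matrix.toLin'_apply]

lemma cont_matCLM {n : ℕ} : Continuous (matCLM (n := n)) :=
  (matCLMₗ n).continuous_of_finiteDimensional

lemma key_integrable {n : ℕ} (A : Matrix (Fin n) (Fin n) ℝ) (c a b : ℝ)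
    {u : ℝ → Fin n → ℝ} (hu : Measurable u) {C : ℝ}
    (hC : ∀ t ∈ Set.uIcc a b, ‖u t‖ ≤ C) :
    IntervalIntegrable (fun t => mexp ((c - t) • A) *ᵥ u t) volume a b := by
  have hF : Continuous fun t : ℝ => matCLM (mexp ((c - t) • A)) :=
    cont_matCLM.comp (cont_mexp A c)
  obtain ⟨K, hK⟩ := (isCompact_uIcc (a := a) (b := b)).exists_bound_of_continuousOn
    (f := fun t : ℝ => matCLM (mexp ((c - t) • A))) hF.continuousOn
  have hgm : Measurable fun t => mexp ((c - t) • A) *ᵥ u t := by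
    have : Measurable fun t => matCLM (mexp ((c - t) • A)) (u t) :=
      isBoundedBilinearMap_apply.continuous.measurable.comp
        ((hF.measurable).prodMk hu)
    simpa [matCLM_apply] using this
  have hC0 : 0 ≤ C := le_trans (norm_nonneg _) (hC a left_mem_uIcc)
  have hK0 : 0 ≤ K := le_trans (norm_nonneg _) (hK a left_mem_uIcc)
  rw [intervalIntegrable_iff]
  refine Integrable.mono' (g := fun _ => K * C)
    (integrableOn_const measure_Ioc_lt_top.ne)
    hgm.aestronglyMeasurable ?_
  refine (ae_restrict_iff' measurableSet_uIoc).mpr (ae_of_all _ fun t ht => ?_)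
  have ht' : t ∈ Set.uIcc a b := Set.uIoc_subset_uIcc ht
  calc ‖mexp ((c - t) • A) *ᵥ u t‖ = ‖matCLM (mexp ((c - t) • A)) (u t)‖ := by
        rw [matCLM_apply]
    _ ≤ ‖matCLM (mexp ((c - t) • A))‖ * ‖u t‖ := ContinuousLinearMap.le_opNorm _ _
    _ ≤ K * C := mul_le_mul (hK t ht') (hC t ht') (norm_nonneg _) hK0

lemma key_split {n : ℕ} (A : Matrix (Fin n) (Fin n) ℝ) (T₁ T₂ : ℝ)
    (hT₁ : 0 ≤ T₁) (hT₂ : 0 ≤ T₂) {u : ℝ → Fin n → ℝ} (hu : Measurable u)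
    {C : ℝ} (hmem : ∀ t ∈ Set.Icc 0 (T₁ + T₂), ‖u t‖ ≤ C) :
    (∫ t in (0:ℝ)..(T₁ + T₂), mexp ((T₁ + T₂ - t) • A) *ᵥ u t)
      = mexp (T₂ • A) *ᵥ (∫ t in (0:ℝ)..T₁, mexp ((T₁ - t) • A) *ᵥ u t)
        + ∫ t in (0:ℝ)..T₂, mexp ((T₂ - t) • A) *ᵥ u (t + T₁) := by
  have hsub1 : Set.uIcc (0:ℝ) T₁ ⊆ Set.Icc 0 (T₁ + T₂) := by
    rw [Set.uIcc_of_le hT₁]; exact Set.Icc_subset_Icc_right (by linarith)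
  have hsub2 : Set.uIcc T₁ (T₁ + T₂) ⊆ Set.Icc 0 (T₁ + T₂) := by
    rw [Set.uIcc_of_le (by linarith)]; exact Set.Icc_subset_Icc_left hT₁
  have I1 : IntervalIntegrable (fun t => mexp ((T₁ + T₂ - t) • A) *ᵥ u t) volume 0 T₁ :=
    key_integrable A _ _ _ hu (fun t ht => hmem t (hsub1 ht))
  have I2 : IntervalIntegrable (fun t => mexp ((T₁ + T₂ - t) • A) *ᵥ u t) volume T₁ (T₁ + T₂) :=
    key_integrable A _ _ _ hu (fun t ht => hmem t (hsub2 ht))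
  rw [← integral_add_adjacent_intervals I1 I2]
  congr 1
  · -- first piece
    have I1' : IntervalIntegrable (fun t => mexp ((T₁ - t) • A) *ᵥ u t) volume 0 T₁ :=
      key_integrable A _ _ _ hu (fun t ht => hmem t (hsub1 ht))
    have : (∫ t in (0:ℝ)..T₁, mexp ((T₁ + T₂ - t) • A) *ᵥ u t)
        = ∫ t in (0:ℝ)..T₁, matCLM (mexp (T₂ • A)) (mexp ((T₁ - t) • A) *ᵥ u t) := by
      refine intervalIntegral.integral_congr fun t _ => ?_
      rw [matCLM_apply, Matrix.mulVec_mulVec, ← mexp_split]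
      ring_nf
    rw [this, ContinuousLinearMap.intervalIntegral_comp_comm _ I1', matCLM_apply]
  · -- second piece
    have := intervalIntegral.integral_comp_add_right (a := (0:ℝ)) (b := T₂)
      (fun t => mexp ((T₁ + T₂ - t) • A) *ᵥ u t) T₁
    rw [zero_add, add_comm T₂ T₁] at this
    rw [← this]
    refine intervalIntegral.integral_congr fun t _ => ?_
    have : T₁ + T₂ - (t + T₁) = T₂ - t := by ring
    rw [this]

/-- Semigroup property of the input reachable set:
`R_p(T₁ + T₂) = exp(A T₂) · R_p(T₁) + R_p(T₂)` (Minkowski sum). -/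
theorem stmt19 {n : ℕ} (A : Matrix (Fin n) (Fin n) ℝ) (U : Set (Fin n → ℝ))
    (hUne : U.Nonempty) (hUbd : Bornology.IsBounded U)
    (T₁ T₂ : ℝ) (hT₁ : 0 ≤ T₁) (hT₂ : 0 ≤ T₂) :
    Rp A U (T₁ + T₂) =
      {z | ∃ x ∈ Rp A U T₁, ∃ y ∈ Rp A U T₂, z = mexp (T₂ • A) *ᵥ x + y} := by
  obtain ⟨C, hCU⟩ : ∃ C, ∀ x ∈ U, ‖x‖ ≤ C := isBounded_iff_forall_norm_le.mp hUbd
  ext z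
  constructor
  · rintro ⟨u, hu, hmem, rfl⟩
    have hbd : ∀ t ∈ Set.Icc (0:ℝ) (T₁ + T₂), ‖u t‖ ≤ C := fun t ht => hCU _ (hmem t ht)
    refine ⟨∫ t in (0:ℝ)..T₁, mexp ((T₁ - t) • A) *ᵥ u t,
      ⟨u, hu, fun t ht => hmem t (Set.Icc_subset_Icc_right (by linarith) ht), rfl⟩,
      ∫ t in (0:ℝ)..T₂, mexp ((T₂ - t) • A) *ᵥ u (t + T₁),
      ⟨fun t => u (t + T₁), hu.comp (measurable_id.add_const T₁),
        fun t ht => hmem _ ⟨by linarith [ht.1], by linarith [ht.2]⟩, rfl⟩, ?_⟩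
    exact key_split A T₁ T₂ hT₁ hT₂ hu hbd
  · rintro ⟨x, ⟨u₁, hu₁, hmem₁, rfl⟩, y, ⟨u₂, hu₂, hmem₂, rfl⟩, rfl⟩
    classical
    set u : ℝ → Fin n → ℝ := fun t => if t ≤ T₁ then u₁ t else u₂ (t - T₁) with hudef
    have hu : Measurable u :=
      Measurable.ite (measurableSet_le measurable_id measurable_const) hu₁
        (hu₂.comp (measurable_id.sub measurable_const))
    have hmem : ∀ t ∈ Set.Icc (0:ℝ) (T₁ + T₂), u t ∈ U := by
      intro t ht
      by_cases h : t ≤ T₁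
      · simpa [hudef, h] using hmem₁ t ⟨ht.1, h⟩
      · simp only [hudef, h, if_false]
        exact hmem₂ _ ⟨by push_neg at h; linarith, by linarith [ht.2]⟩
    have hbd : ∀ t ∈ Set.Icc (0:ℝ) (T₁ + T₂), ‖u t‖ ≤ C := fun t ht => hCU _ (hmem t ht)
    refine ⟨u, hu, hmem, ?_⟩
    rw [key_split A T₁ T₂ hT₁ hT₂ hu hbd]
    have e1 : (∫ t in (0:ℝ)..T₁, mexp ((T₁ - t) • A) *ᵥ u t)
        = ∫ t in (0:ℝ)..T₁, mexp ((T₁ - t) • A) *ᵥ u₁ t := by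
      refine intervalIntegral.integral_congr fun t ht => ?_
      rw [Set.uIcc_of_le hT₁] at ht
      simp [hudef, ht.2]
    have e2 : (∫ t in (0:ℝ)..T₂, mexp ((T₂ - t) • A) *ᵥ u (t + T₁))
        = ∫ t in (0:ℝ)..T₂, mexp ((T₂ - t) • A) *ᵥ u₂ t := by
      refine intervalIntegral.integral_congr_ae (ae_of_all _ fun t ht => ?_)
      rw [Set.uIoc_of_le hT₂] at ht
      have h1 : ¬ (t + T₁ ≤ T₁) := by linarith [ht.1]
      simp [hudef, h1]
    rw [e1, e2]
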